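/- Let K be a field of characteristic zero viewed as a differential field with zero derivation, and let A be a differential K-algebra with derivation δ that is differentially simple and finitely generated as a K-algebra (not just differentially). Then for any maximal ideal M of A, the quotient map ψ : A → A/M induces an injective differential homomorphism T_ψ : A → (A/M)[[t]] via T_ψ(a) = Σ ψ(δᵏa) tᵏ/k!. -/

import Mathlib

open Finset in
private lemma myIterLeibniz {K A : Type*} [Field K] [CommRing A] [Algebra K A]
    (δ : Derivation K A A) (n : ℕ) (p q : A) :
    (⇑δ)^[n] (p * q) =
      ∑ k ∈ range (n + 1), n.choose k • ((⇑δ)^[n - k] p * (⇑δ)^[k] q) := by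
  induction n with
  | zero => simp
  | succ n IH =>
    calc
      (⇑δ)^[n + 1] (p * q) =
          δ (∑ k ∈ range n.succ, n.choose k • ((⇑δ)^[n - k] p * (⇑δ)^[k] q)) := by
        rw [Function.iterate_succ_apply', IH]
      _ = (∑ k ∈ range n.succ, n.choose k • ((⇑δ)^[n - k + 1] p * (⇑δ)^[k] q)) +
          ∑ k ∈ range n.succ, n.choose k • ((⇑δ)^[n - k] p * (⇑δ)^[k + 1] q) := by
        simp_rw [map_sum, map_nsmul, Derivation.leibniz, smul_eq_mul,
          Function.iterate_succ_apply', smul_add, sum_add_distrib]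
        rw [add_comm]
        congr 1 <;> refine sum_congr rfl fun k _ => ?_ <;> ring_nf
      _ = (∑ k ∈ range n.succ,
                n.choose k.succ • ((⇑δ)^[n - k] p * (⇑δ)^[k + 1] q)) +
              1 • ((⇑δ)^[n + 1] p * (⇑δ)^[0] q) +
            ∑ k ∈ range n.succ, n.choose k • ((⇑δ)^[n - k] p * (⇑δ)^[k + 1] q) := ?_
      _ = ((∑ k ∈ range n.succ, n.choose k • ((⇑δ)^[n - k] p * (⇑δ)^[k + 1] q)) +
              ∑ k ∈ range n.succ,
                n.choose k.succ • ((⇑δ)^[n - k] p * (⇑δ)^[k + 1] q)) +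
            1 • ((⇑δ)^[n + 1] p * (⇑δ)^[0] q) := by
        rw [add_comm, add_assoc]
      _ = (∑ i ∈ range n.succ,
              (n + 1).choose (i + 1) • ((⇑δ)^[n + 1 - (i + 1)] p * (⇑δ)^[i + 1] q)) +
            1 • ((⇑δ)^[n + 1] p * (⇑δ)^[0] q) := by
        simp_rw [Nat.choose_succ_succ, Nat.succ_sub_succ, add_smul, sum_add_distrib]
      _ = ∑ k ∈ range n.succ.succ,
            n.succ.choose k • ((⇑δ)^[n.succ - k] p * (⇑δ)^[k] q) := by
        rw [sum_range_succ' _ n.succ, Nat.choose_zero_right, tsub_zero]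
    congr
    refine (sum_range_succ' _ _).trans (congr_arg₂ (· + ·) ?_ ?_)
    · rw [sum_range_succ, Nat.choose_succ_self, zero_smul, add_zero]
      refine sum_congr rfl fun k hk => ?_
      rw [mem_range] at hk
      congr
      omega
    · rw [Nat.choose_zero_right, tsub_zero]

/-- Let `K` be a field of characteristic zero viewed as a
differential field with zero derivation, and let `A` be a differential `K`-algebra
(so the derivation `δ` is `K`-linear) which is differentially simple and finitely
generated as a `K`-algebra. Then for any maximal ideal `M` of `A`, the quotient map
`ψ : A → A/M` induces an injective differential ring homomorphism
`T_ψ : A → (A/M)[[t]]`, `T_ψ(a) = Σ_k ψ(δᵏ a) tᵏ / k!`. -/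
theorem taylor_of_maximal_ideal_injective {K A : Type*} [Field K] [CharZero K]
    [CommRing A] [Algebra K A] [Algebra.FiniteType K A]
    (δ : Derivation K A A)
    (hsimple : ∀ I : Ideal A, (∀ a ∈ I, δ a ∈ I) → I = ⊥ ∨ I = ⊤)
    (M : Ideal A) (hM : M.IsMaximal) :
    ∃ F : A →+* PowerSeries (A ⧸ M),
      (∀ (a : A) (k : ℕ), PowerSeries.coeff (R := A ⧸ M) k (F a) =
        Ideal.Quotient.mk M ((⇑δ)^[k] a) * Ring.inverse (k.factorial : A ⧸ M)) ∧
      Function.Injective F ∧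
      (∀ (a : A) (k : ℕ), PowerSeries.coeff (R := A ⧸ M) k (F (δ a)) =
        (k + 1 : A ⧸ M) * PowerSeries.coeff (R := A ⧸ M) (k + 1) (F a)) := by
  haveI := hM
  letI : Field (A ⧸ M) := Ideal.Quotient.field M
  haveI : CharZero (A ⧸ M) :=
    charZero_of_injective_algebraMap (algebraMap K (A ⧸ M)).injective
  set ψ := Ideal.Quotient.mk M with hψ
  have hfac : ∀ k : ℕ, ((k.factorial : ℕ) : A ⧸ M) ≠ 0 := fun k =>
    Nat.cast_ne_zero.mpr k.factorial_ne_zero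
  -- iterates are additive
  have hadd : ∀ (k : ℕ) (a b : A), (⇑δ)^[k] (a + b) = (⇑δ)^[k] a + (⇑δ)^[k] b := by
    intro k
    induction k with
    | zero => intro a b; rfl
    | succ k IH =>
      intro a b
      simp [Function.iterate_succ_apply, map_add, IH]
  have hzero : ∀ k : ℕ, (⇑δ)^[k] (0 : A) = 0 := by
    intro k
    induction k with
    | zero => rfl
    | succ k IH => simp [Function.iterate_succ_apply, map_zero, IH]
  have hone : ∀ k : ℕ, (⇑δ)^[k + 1] (1 : A) = 0 := by
    intro k
    rw [Function.iterate_succ_apply, Derivation.map_one_eq_zero, hzero]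
  -- the coefficient function
  set c : A → ℕ → A ⧸ M := fun a k => ψ ((⇑δ)^[k] a) * ((k.factorial : ℕ) : A ⧸ M)⁻¹
    with hc
  -- key combinatorial identity for coefficients of products
  have hmulkey : ∀ (a b : A) (k : ℕ),
      c (a * b) k = ∑ i ∈ Finset.range (k + 1), c a i * c b (k - i) := by
    intro a b k
    rw [hc]
    simp only
    rw [mul_comm a b, myIterLeibniz δ k b a, map_sum, Finset.sum_mul]
    refine Finset.sum_congr rfl fun i hi => ?_
    rw [Finset.mem_range] at hi
    have hik : i ≤ k := Nat.lt_succ_iff.mp hi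
    have hkey : ((k.choose i : ℕ) : A ⧸ M) * ((k.factorial : ℕ) : A ⧸ M)⁻¹ =
        ((i.factorial : ℕ) : A ⧸ M)⁻¹ * (((k - i).factorial : ℕ) : A ⧸ M)⁻¹ := by
      have h := Nat.choose_mul_factorial_mul_factorial hik
      have hinv : ((k.factorial : ℕ) : A ⧸ M) =
          ((k.choose i : ℕ) : A ⧸ M) * ((i.factorial : ℕ) : A ⧸ M) *
            (((k - i).factorial : ℕ) : A ⧸ M) := by exact_mod_cast h.symm
      apply mul_right_cancel₀ (hfac k)
      rw [mul_assoc, inv_mul_cancel₀ (hfac k), mul_one]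
      rw [hinv]
      calc ((k.choose i : ℕ) : A ⧸ M)
          = ((k.choose i : ℕ) : A ⧸ M) *
              (((i.factorial : ℕ) : A ⧸ M) * ((i.factorial : ℕ) : A ⧸ M)⁻¹) *
              ((((k - i).factorial : ℕ) : A ⧸ M) * (((k - i).factorial : ℕ) : A ⧸ M)⁻¹) := by
            rw [mul_inv_cancel₀ (hfac i), mul_inv_cancel₀ (hfac (k - i)), mul_one, mul_one]
        _ = _ := by ring
    push_cast [nsmul_eq_mul]
    calc ((k.choose i : ℕ) : A ⧸ M) * (ψ ((⇑δ)^[k - i] b) * ψ ((⇑δ)^[i] a)) *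
          ((k.factorial : ℕ) : A ⧸ M)⁻¹
        = (ψ ((⇑δ)^[i] a) * ψ ((⇑δ)^[k - i] b)) *
            (((k.choose i : ℕ) : A ⧸ M) * ((k.factorial : ℕ) : A ⧸ M)⁻¹) := by ring
      _ = _ := by rw [hkey]; ring
  -- build the ring hom
  refine ⟨{ toFun := fun a => PowerSeries.mk (c a)
            map_one' := ?_
            map_mul' := ?_
            map_zero' := ?_
            map_add' := ?_ }, ?_, ?_, ?_⟩
  · ext k
    rw [PowerSeries.coeff_mk, PowerSeries.coeff_one, hc]
    cases k with
    | zero => simp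
    | succ k => simp [hone k]
  · intro a b
    ext k
    rw [PowerSeries.coeff_mul]
    simp only [PowerSeries.coeff_mk]
    rw [hmulkey, Finset.Nat.sum_antidiagonal_eq_sum_range_succ (fun i j => c a i * c b j)]
  · ext k
    simp [hc, hzero k]
  · intro a b
    ext k
    simp [hc, hadd k a b, map_add, add_mul]
  -- coefficient formula
  · intro a k
    rw [RingHom.coe_mk, MonoidHom.coe_mk, OneHom.coe_mk, PowerSeries.coeff_mk, hc,
      Ring.inverse_eq_inv']
  -- injectivity
  · rw [injective_iff_map_eq_zero]
    intro a ha
    have hmem : ∀ k : ℕ, (⇑δ)^[k] a ∈ M := by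
      intro k
      have h1 : c a k = 0 := by
        have := congrArg (PowerSeries.coeff (R := A ⧸ M) k) ha
        rwa [RingHom.coe_mk, MonoidHom.coe_mk, OneHom.coe_mk, PowerSeries.coeff_mk,
          map_zero] at this
      rw [hc] at h1
      simp only at h1
      rcases mul_eq_zero.mp h1 with h | h
      · exact (Ideal.Quotient.eq_zero_iff_mem).mp h
      · exact absurd (inv_eq_zero.mp h) (hfac k)
    -- the differential ideal of elements all of whose derivatives lie in M
    set I : Ideal A :=
      { carrier := {x | ∀ k : ℕ, (⇑δ)^[k] x ∈ M}
        add_mem' := fun {x y} hx hy k => by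
          rw [hadd k x y]; exact M.add_mem (hx k) (hy k)
        zero_mem' := fun k => by rw [hzero k]; exact M.zero_mem
        smul_mem' := fun r x hx k => by
          rw [smul_eq_mul, myIterLeibniz δ k r x]
          refine Ideal.sum_mem M fun i hi => ?_
          exact nsmul_mem (M.mul_mem_left _ (hx i)) _ } with hI
    have hδI : ∀ x ∈ I, δ x ∈ I := by
      intro x hx k
      rw [← Function.iterate_succ_apply]
      exact hx (k + 1)
    rcases hsimple I hδI with h | h
    · have : a ∈ I := hmem
      rw [h] at this
      exact this
    · exfalso
      have h1 : (1 : A) ∈ I := h ▸ Submodule.mem_top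
      have := h1 0
      exact hM.ne_top (M.eq_top_of_isUnit_mem this isUnit_one)
  -- derivation property
  · intro a k
    rw [RingHom.coe_mk, MonoidHom.coe_mk, OneHom.coe_mk, PowerSeries.coeff_mk,
      PowerSeries.coeff_mk, hc]
    simp only
    rw [← Function.iterate_succ_apply]
    have hne : ((k : A ⧸ M) + 1) ≠ 0 := by
      have : (((k + 1 : ℕ)) : A ⧸ M) ≠ 0 := Nat.cast_ne_zero.mpr (Nat.succ_ne_zero k)
      push_cast at this
      exact this
    rw [Nat.factorial_succ]
    push_cast
    rw [mul_inv]
    calc ψ ((⇑δ)^[k + 1] a) * (((k.factorial : ℕ) : A ⧸ M))⁻¹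
        = ψ ((⇑δ)^[k + 1] a) * (((k.factorial : ℕ) : A ⧸ M))⁻¹ *
            (((k : A ⧸ M) + 1) * ((k : A ⧸ M) + 1)⁻¹) := by
          rw [mul_inv_cancel₀ hne, mul_one]
      _ = ((k : A ⧸ M) + 1) *
            (ψ ((⇑δ)^[k + 1] a) * (((k : A ⧸ M) + 1)⁻¹ * (((k.factorial : ℕ) : A ⧸ M))⁻¹)) := by
          ring
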